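/- Let 1 < p < ∞, p ≠ 2, and let x, y ∈ ℝ^d. If p > 2 then ‖x+y‖_p^p + ‖x-y‖_p^p ≥ 2(‖x‖_p^p + ‖y‖_p^p), with equality if and only if for every coordinate index i, x_i = 0 or y_i = 0. -/
import Mathlib


open Finset

private lemma rpow_add_lt {u v z : ℝ} (hu : 0 < u) (hv : 0 < v) (hz : 1 < z) :
    u ^ z + v ^ z < (u + v) ^ z := by
  have hz1 : 0 < z - 1 := by linarith
  have h1 : u ^ z = u * u ^ (z - 1) := by
    rw [← Real.rpow_one_add' (le_of_lt hu) (by linarith)]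
    ring_nf
  have h2 : v ^ z = v * v ^ (z - 1) := by
    rw [← Real.rpow_one_add' (le_of_lt hv) (by linarith)]
    ring_nf
  have h3 : u ^ (z - 1) < (u + v) ^ (z - 1) :=
    Real.rpow_lt_rpow hu.le (by linarith) hz1
  have h4 : v ^ (z - 1) < (u + v) ^ (z - 1) :=
    Real.rpow_lt_rpow hv.le (by linarith) hz1
  have h5 : (u + v) ^ z = (u + v) * (u + v) ^ (z - 1) := by
    rw [← Real.rpow_one_add' (by positivity) (by linarith)]
    ring_nf
  calc u ^ z + v ^ z = u * u ^ (z - 1) + v * v ^ (z - 1) := by rw [h1, h2]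
    _ < u * (u + v) ^ (z - 1) + v * (u + v) ^ (z - 1) := by
        gcongr
    _ = (u + v) * (u + v) ^ (z - 1) := by ring
    _ = (u + v) ^ z := h5.symm

private lemma rpow_add_le' {u v z : ℝ} (hu : 0 ≤ u) (hv : 0 ≤ v) (hz : 1 < z) :
    u ^ z + v ^ z ≤ (u + v) ^ z := by
  rcases eq_or_lt_of_le hu with h | h
  · simp [← h, Real.zero_rpow (by linarith : z ≠ 0)]
  rcases eq_or_lt_of_le hv with h' | h'
  · simp [← h', Real.zero_rpow (by linarith : z ≠ 0)]
  exact (rpow_add_lt h h' hz).le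

private lemma sq_rpow_half (p : ℝ) (hp : 0 ≤ p) (c : ℝ) : (c ^ 2) ^ (p / 2) = |c| ^ p := by
  rw [← sq_abs c, ← Real.rpow_natCast |c| 2, ← Real.rpow_mul (abs_nonneg c)]
  norm_num
  rw [mul_div_cancel₀ p (by norm_num : (2:ℝ) ≠ 0)]

private lemma conv_step (p : ℝ) (hp : 2 < p) (a b : ℝ) :
    2 * ((a ^ 2 + b ^ 2) ^ (p / 2)) ≤ |a + b| ^ p + |a - b| ^ p := by
  have hconv := convexOn_rpow (by linarith : (1:ℝ) ≤ p / 2)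
  have key := hconv.2 (Set.mem_Ici.2 (sq_nonneg (a + b))) (Set.mem_Ici.2 (sq_nonneg (a - b)))
    (by norm_num : (0:ℝ) ≤ 1/2) (by norm_num : (0:ℝ) ≤ 1/2) (by norm_num)
  simp only [smul_eq_mul] at key
  have heq : (1/2 : ℝ) * (a + b) ^ 2 + (1/2 : ℝ) * (a - b) ^ 2 = a ^ 2 + b ^ 2 := by ring
  rw [heq, sq_rpow_half p (by linarith), sq_rpow_half p (by linarith)] at key
  linarith

private lemma key_le (p : ℝ) (hp : 2 < p) (a b : ℝ) :
    2 * (|a| ^ p + |b| ^ p) ≤ |a + b| ^ p + |a - b| ^ p := by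
  have h1 : |a| ^ p + |b| ^ p ≤ (a ^ 2 + b ^ 2) ^ (p / 2) := by
    rw [← sq_rpow_half p (by linarith), ← sq_rpow_half p (by linarith)]
    exact rpow_add_le' (sq_nonneg a) (sq_nonneg b) (by linarith)
  have h2 := conv_step p hp a b
  linarith

private lemma key_lt (p : ℝ) (hp : 2 < p) {a b : ℝ} (ha : a ≠ 0) (hb : b ≠ 0) :
    2 * (|a| ^ p + |b| ^ p) < |a + b| ^ p + |a - b| ^ p := by
  have h1 : |a| ^ p + |b| ^ p < (a ^ 2 + b ^ 2) ^ (p / 2) := by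
    rw [← sq_rpow_half p (by linarith), ← sq_rpow_half p (by linarith)]
    exact rpow_add_lt (by positivity) (by positivity) (by linarith)
  have h2 := conv_step p hp a b
  linarith

/-- Clarkson's inequality for the ℓᵖ norm on ℝᵈ for `p > 2`, with equality iff
`x` and `y` have disjoint supports. Here `‖x‖_p^p = ∑ i, |x i|^p`. -/
theorem clarkson_lp (d : ℕ) (p : ℝ) (hp1 : 1 < p) (hp2 : p ≠ 2) (hp3 : 2 < p)
    (x y : Fin d → ℝ) :
    2 * ((∑ i, |x i| ^ p) + ∑ i, |y i| ^ p) ≤ (∑ i, |x i + y i| ^ p) + ∑ i, |x i - y i| ^ p ∧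
    ((∑ i, |x i + y i| ^ p) + ∑ i, |x i - y i| ^ p
        = 2 * ((∑ i, |x i| ^ p) + ∑ i, |y i| ^ p)
      ↔ ∀ i, x i = 0 ∨ y i = 0) := by
  have hL : 2 * ((∑ i, |x i| ^ p) + ∑ i, |y i| ^ p)
      = ∑ i, 2 * (|x i| ^ p + |y i| ^ p) := by
    rw [← Finset.sum_add_distrib, Finset.mul_sum]
  have hR : (∑ i, |x i + y i| ^ p) + ∑ i, |x i - y i| ^ p
      = ∑ i, (|x i + y i| ^ p + |x i - y i| ^ p) := by
    rw [Finset.sum_add_distrib]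
  have hle : ∀ i ∈ Finset.univ (α := Fin d),
      2 * (|x i| ^ p + |y i| ^ p) ≤ |x i + y i| ^ p + |x i - y i| ^ p :=
    fun i _ => key_le p hp3 (x i) (y i)
  constructor
  · rw [hL, hR]
    exact Finset.sum_le_sum hle
  · rw [hL, hR]
    constructor
    · intro heq i
      have hall := (Finset.sum_eq_sum_iff_of_le hle).1 heq.symm i (Finset.mem_univ i)
      by_contra hc
      push_neg at hc
      exact absurd hall.symm (ne_of_lt (key_lt p hp3 hc.1 hc.2)).symm
    · intro h
      apply Finset.sum_congr rfl
      intro i _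
      have hp0 : p ≠ 0 := by linarith
      rcases h i with h0 | h0 <;> simp [h0, Real.zero_rpow hp0, abs_neg] <;> ring
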